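/- Consider the regression model: on a probability space, X : Ω → ℝ^d and N : Ω → ℝ are independent random variables with E[N] = 0, E[N²] ≤ σ² for a given σ > 0, E[⟨X,u⟩⁴] ≤ C·(E[⟨X,u⟩²])² for all u ∈ ℝ^d for a given C ≥ 1, and E[⟨X,u⟩²] ≤ 1 for every unit vector u (all stated moments finite); let Y := ⟨X,w*⟩ + N for a fixed w* ∈ ℝ^d. Then for every w ∈ ℝ^d, every κ > 0, and every unit vector u ∈ ℝ^d, E[ ⟨g(X,Y;w,κ), u⟩² ] ≤ σ² + C·E[⟨X, w−w*⟩²], where g(X,Y;w,κ) := κ·((⟨X,w⟩ − Y)/max(|⟨X,w⟩ − Y|, κ))·X; in particular, Var( ⟨g(X,Y;w,κ), u⟩ ) ≤ σ² + C·E[⟨X, w−w*⟩²]. -/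

import Mathlib

open MeasureTheory ProbabilityTheory
open scoped RealInnerProductSpace ENNReal

lemma clip_sq_le (κ r b : ℝ) (hκ : 0 < κ) : (κ * (r / max |r| κ) * b)^2 ≤ (r*b)^2 := by
  have hm : 0 < max |r| κ := lt_max_of_lt_right hκ
  have habs : |κ * (r / max |r| κ)| ≤ |r| := by
    rw [abs_mul, abs_div, abs_of_pos hκ, abs_of_pos hm]
    rw [mul_div_assoc'] at *
    rw [div_le_iff₀ hm]
    nlinarith [le_max_right |r| κ, abs_nonneg r]
  have : |κ * (r / max |r| κ) * b| ≤ |r * b| := by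
    rw [abs_mul, abs_mul r b]
    exact mul_le_mul_of_nonneg_right habs (abs_nonneg _)
  calc (κ * (r / max |r| κ) * b)^2 = |κ * (r / max |r| κ) * b|^2 := (sq_abs _).symm
  _ ≤ |r*b|^2 := pow_le_pow_left₀ (abs_nonneg _) this 2
  _ = (r*b)^2 := sq_abs _

lemma clip_abs_le (κ r b : ℝ) (hκ : 0 < κ) : |κ * (r / max |r| κ) * b| ≤ κ * |b| := by
  have hm : 0 < max |r| κ := lt_max_of_lt_right hκ
  rw [abs_mul]
  refine mul_le_mul_of_nonneg_right ?_ (abs_nonneg _)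
  rw [abs_mul, abs_div, abs_of_pos hκ, abs_of_pos hm]
  nlinarith [div_le_one_of_le₀ (le_max_left |r| κ) hm.le, abs_nonneg r]

/-- The clipped (Huber) gradient of the squared loss at parameter `w` with clipping
parameter `κ`, for a sample `(x, y)`. -/
noncomputable def clipGrad {d : ℕ} (κ : ℝ) (w x : EuclideanSpace ℝ (Fin d)) (y : ℝ) :
    EuclideanSpace ℝ (Fin d) :=
  (κ * ((⟪x, w⟫ - y) / max (|⟪x, w⟫ - y|) κ)) • x

/-- Under the regression model, for every `w`, every `κ > 0` and every
unit vector `u`, the second moment of the projected clipped gradient satisfies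
`E[⟨g(X,Y;w,κ), u⟩²] ≤ σ² + C·E[⟨X, w−w*⟩²]`; in particular its variance obeys the same
bound. -/
theorem stmt18 {Ω : Type*} [MeasureSpace Ω] [IsProbabilityMeasure (ℙ : Measure Ω)]
    {d : ℕ} (X : Ω → EuclideanSpace ℝ (Fin d)) (N : Ω → ℝ)
    (hXmeas : Measurable X) (hNmeas : Measurable N)
    (hindep : IndepFun X N ℙ)
    (hNmean : (∫ ω, N ω) = 0)
    (σ : ℝ) (hσ : 0 < σ)
    (hN2 : MemLp N 2 ℙ) (hNvar : (∫ ω, (N ω) ^ 2) ≤ σ ^ 2)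
    (C : ℝ) (hC : 1 ≤ C)
    (hX4 : MemLp X 4 ℙ)
    (hhc : ∀ u : EuclideanSpace ℝ (Fin d),
      (∫ ω, ⟪X ω, u⟫ ^ 4) ≤ C * (∫ ω, ⟪X ω, u⟫ ^ 2) ^ 2)
    (hsec : ∀ u : EuclideanSpace ℝ (Fin d), ‖u‖ = 1 → (∫ ω, ⟪X ω, u⟫ ^ 2) ≤ 1)
    (wstar : EuclideanSpace ℝ (Fin d)) :
    ∀ (w : EuclideanSpace ℝ (Fin d)) (κ : ℝ), 0 < κ →
      ∀ u : EuclideanSpace ℝ (Fin d), ‖u‖ = 1 →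
        (∫ ω, ⟪clipGrad κ w (X ω) (⟪X ω, wstar⟫ + N ω), u⟫ ^ 2) ≤
            σ ^ 2 + C * (∫ ω, ⟪X ω, w - wstar⟫ ^ 2) ∧
          variance (fun ω => ⟪clipGrad κ w (X ω) (⟪X ω, wstar⟫ + N ω), u⟫) ℙ ≤
            σ ^ 2 + C * (∫ ω, ⟪X ω, w - wstar⟫ ^ 2) := by
  intro w κ hκ u hu
  set v : EuclideanSpace ℝ (Fin d) := w - wstar with hv
  set A : Ω → ℝ := fun ω => ⟪X ω, v⟫ with hA
  set B : Ω → ℝ := fun ω => ⟪X ω, u⟫ with hB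
  set G : Ω → ℝ := fun ω => ⟪clipGrad κ w (X ω) (⟪X ω, wstar⟫ + N ω), u⟫ with hG
  -- pointwise formula
  have hGform : ∀ ω, G ω =
      κ * ((A ω - N ω) / max (|A ω - N ω|) κ) * B ω := by
    intro ω
    have hr : ⟪X ω, w⟫ - (⟪X ω, wstar⟫ + N ω) = A ω - N ω := by
      simp [hA, hv, inner_sub_right]; ring
    simp only [hG, clipGrad, real_inner_smul_left, hr]; rfl
  -- measurability of basic pieces
  have hmB : Measurable fun x : EuclideanSpace ℝ (Fin d) => ⟪x, u⟫ :=
    (continuous_id.inner continuous_const).measurable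
  have hmA : Measurable fun x : EuclideanSpace ℝ (Fin d) => ⟪x, v⟫ :=
    (continuous_id.inner continuous_const).measurable
  have hAmeas : Measurable A := hmA.comp hXmeas
  have hBmeas : Measurable B := hmB.comp hXmeas
  have hGmeas : Measurable G := by
    have : Measurable fun ω => κ * ((A ω - N ω) / max (|A ω - N ω|) κ) * B ω := by
      exact ((measurable_const.mul ((hAmeas.sub hNmeas).div
        ((hAmeas.sub hNmeas).abs.max measurable_const))).mul hBmeas)
    exact (funext hGform ▸ this)
  -- MemLp facts
  have hA4 : MemLp A 4 ℙ := hX4.inner_const v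
  have hB4 : MemLp B 4 ℙ := hX4.inner_const u
  have hA2 : MemLp A 2 ℙ := hA4.mono_exponent (by norm_num)
  have hB2 : MemLp B 2 ℙ := hB4.mono_exponent (by norm_num)
  have half : (1 : ℝ≥0∞) / 2 = 1 / 4 + 1 / 4 := by
    rw [ENNReal.div_add_div_same, one_add_one_eq_two, ENNReal.div_eq_div_iff] <;> norm_num
  have hAB2 : MemLp (fun ω => A ω * B ω) 2 ℙ := hB4.smul hA4 (hpqr := ⟨by simpa only [one_div] using half.symm⟩)
  have one' : (1 : ℝ≥0∞) / 1 = 1 / 2 + 1 / 2 := by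
    rw [ENNReal.div_add_div_same, one_add_one_eq_two, div_one]
    exact (ENNReal.div_self two_ne_zero ENNReal.ofNat_ne_top).symm
  have hAB2B : Integrable (fun ω => A ω * B ω ^ 2) ℙ := by
    have h1 : MemLp (fun ω => (A ω * B ω) * B ω) 1 ℙ := hB2.smul hAB2 (hpqr := ⟨by simpa only [one_div] using one'.symm⟩)
    refine (memLp_one_iff_integrable.mp h1).congr ?_
    filter_upwards with ω
    ring
  -- integrability of key products
  have iB2 : Integrable (fun ω => B ω ^ 2) ℙ := hB2.integrable_sq
  have iN2 : Integrable (fun ω => N ω ^ 2) ℙ := hN2.integrable_sq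
  have iA2B2 : Integrable (fun ω => A ω ^ 2 * B ω ^ 2) ℙ := by
    have := hAB2.integrable_sq
    refine this.congr ?_
    filter_upwards with ω; ring
  have hindNB2 : IndepFun (fun ω => N ω ^ 2) (fun ω => B ω ^ 2) ℙ :=
    hindep.symm.comp (measurable_id.pow_const 2) (hmB.pow_const 2)
  have iN2B2 : Integrable (fun ω => N ω ^ 2 * B ω ^ 2) ℙ :=
    hindNB2.integrable_mul iN2 iB2
  have hindNAB2 : IndepFun N (fun ω => A ω * B ω ^ 2) ℙ :=
    hindep.symm.comp measurable_id (hmA.mul (hmB.pow_const 2))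
  have iNAB2 : Integrable (fun ω => N ω * (A ω * B ω ^ 2)) ℙ :=
    hindNAB2.integrable_mul (hN2.integrable one_le_two) hAB2B
  -- G in L2 and G² integrable
  have hG2 : MemLp G 2 ℙ := by
    refine MemLp.of_le (hB2.const_mul κ) hGmeas.aestronglyMeasurable ?_
    filter_upwards with ω
    rw [hGform ω]
    simp only [Real.norm_eq_abs, abs_mul κ, abs_of_pos hκ]
    exact clip_abs_le κ _ _ hκ
  have iG2 : Integrable (fun ω => G ω ^ 2) ℙ := hG2.integrable_sq
  -- the dominating function and its integrability
  have iDom : Integrable (fun ω => (A ω - N ω) ^ 2 * B ω ^ 2) ℙ := by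
    have : (fun ω => (A ω - N ω) ^ 2 * B ω ^ 2) =
        fun ω => A ω ^ 2 * B ω ^ 2 - 2 * (N ω * (A ω * B ω ^ 2)) + N ω ^ 2 * B ω ^ 2 := by
      funext ω; ring
    rw [this]
    exact (iA2B2.sub (iNAB2.const_mul 2)).add iN2B2
  -- second moment bound
  have aA : (0:ℝ) ≤ ∫ ω, A ω ^ 2 := integral_nonneg fun ω => sq_nonneg _
  have aB : (0:ℝ) ≤ ∫ ω, B ω ^ 2 := integral_nonneg fun ω => sq_nonneg _
  have hB2le1 : (∫ ω, B ω ^ 2) ≤ 1 := hsec u hu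
  have hC0 : (0:ℝ) ≤ C := le_trans zero_le_one hC
  -- Hölder / Cauchy–Schwarz step
  have hA2sq : MemLp (fun ω => A ω ^ 2) 2 ℙ := by
    have h : MemLp (fun ω => A ω * A ω) 2 ℙ := hA4.smul hA4 (hpqr := ⟨by simpa only [one_div] using half.symm⟩)
    exact MemLp.ae_eq (Filter.Eventually.of_forall fun ω => (sq (A ω)).symm) h
  have hB2sq : MemLp (fun ω => B ω ^ 2) 2 ℙ := by
    have h : MemLp (fun ω => B ω * B ω) 2 ℙ := hB4.smul hB4 (hpqr := ⟨by simpa only [one_div] using half.symm⟩)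
    exact MemLp.ae_eq (Filter.Eventually.of_forall fun ω => (sq (B ω)).symm) h
  have hCS : (∫ ω, A ω ^ 2 * B ω ^ 2) ≤
      Real.sqrt (∫ ω, A ω ^ 4) * Real.sqrt (∫ ω, B ω ^ 4) := by
    have hpq : Real.HolderConjugate 2 2 := Real.HolderConjugate.two_two
    have h := integral_mul_le_Lp_mul_Lq_of_nonneg hpq
      (f := fun ω => A ω ^ 2) (g := fun ω => B ω ^ 2)
      (Filter.Eventually.of_forall fun ω => sq_nonneg _)
      (Filter.Eventually.of_forall fun ω => sq_nonneg _)
      (by simpa using hA2sq) (by simpa using hB2sq)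
    have e1 : (∫ ω, (A ω ^ 2) ^ (2:ℝ)) = ∫ ω, A ω ^ 4 := by
      congr 1; funext ω
      rw [show ((2:ℝ)) = ((2:ℕ):ℝ) by norm_num, Real.rpow_natCast]; ring
    have e2 : (∫ ω, (B ω ^ 2) ^ (2:ℝ)) = ∫ ω, B ω ^ 4 := by
      congr 1; funext ω
      rw [show ((2:ℝ)) = ((2:ℕ):ℝ) by norm_num, Real.rpow_natCast]; ring
    rw [e1, e2] at h
    rw [Real.sqrt_eq_rpow, Real.sqrt_eq_rpow]
    simpa using h
  have hmain : (∫ ω, A ω ^ 2 * B ω ^ 2) ≤ C * (∫ ω, A ω ^ 2) := by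
    have h4A : (∫ ω, A ω ^ 4) ≤ C * (∫ ω, A ω ^ 2) ^ 2 := hhc v
    have h4B : (∫ ω, B ω ^ 4) ≤ C * (∫ ω, B ω ^ 2) ^ 2 := hhc u
    calc (∫ ω, A ω ^ 2 * B ω ^ 2)
        ≤ Real.sqrt (∫ ω, A ω ^ 4) * Real.sqrt (∫ ω, B ω ^ 4) := hCS
      _ ≤ Real.sqrt (C * (∫ ω, A ω ^ 2) ^ 2) * Real.sqrt (C * (∫ ω, B ω ^ 2) ^ 2) :=
          mul_le_mul (Real.sqrt_le_sqrt h4A) (Real.sqrt_le_sqrt h4B)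
            (Real.sqrt_nonneg _) (Real.sqrt_nonneg _)
      _ = Real.sqrt ((C * (∫ ω, A ω ^ 2) * (∫ ω, B ω ^ 2)) ^ 2) := by
          rw [← Real.sqrt_mul (by positivity)]
          congr 1; ring
      _ = C * (∫ ω, A ω ^ 2) * (∫ ω, B ω ^ 2) := Real.sqrt_sq (by positivity)
      _ ≤ C * (∫ ω, A ω ^ 2) * 1 :=
          mul_le_mul_of_nonneg_left hB2le1 (by positivity)
      _ = C * (∫ ω, A ω ^ 2) := mul_one _
  -- cross term vanishes
  have hcross : (∫ ω, N ω * (A ω * B ω ^ 2)) = 0 := by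
    have := hindNAB2.integral_fun_mul_eq_mul_integral hNmeas.aestronglyMeasurable
      ((hmA.mul (hmB.pow_const 2)).comp hXmeas).aestronglyMeasurable
    rw [this, hNmean, zero_mul]
  -- noise term
  have hnoise : (∫ ω, N ω ^ 2 * B ω ^ 2) ≤ σ ^ 2 := by
    have heq := hindNB2.integral_fun_mul_eq_mul_integral (hNmeas.pow_const 2).aestronglyMeasurable
      (hBmeas.pow_const 2).aestronglyMeasurable
    rw [heq]
    have hN2nn : (0:ℝ) ≤ ∫ ω, N ω ^ 2 := integral_nonneg fun ω => sq_nonneg _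
    calc (∫ ω, N ω ^ 2) * (∫ ω, B ω ^ 2) ≤ (∫ ω, N ω ^ 2) * 1 :=
        mul_le_mul_of_nonneg_left hB2le1 hN2nn
     _ = ∫ ω, N ω ^ 2 := mul_one _
     _ ≤ σ ^ 2 := hNvar
  -- split the dominating integral
  have hsplit : (∫ ω, (A ω - N ω) ^ 2 * B ω ^ 2) =
      (∫ ω, A ω ^ 2 * B ω ^ 2) - 2 * (∫ ω, N ω * (A ω * B ω ^ 2)) +
        (∫ ω, N ω ^ 2 * B ω ^ 2) := by
    have e : (fun ω => (A ω - N ω) ^ 2 * B ω ^ 2) =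
        fun ω => (A ω ^ 2 * B ω ^ 2 - 2 * (N ω * (A ω * B ω ^ 2))) + N ω ^ 2 * B ω ^ 2 := by
      funext ω; ring
    have i12 : Integrable
        (fun ω => A ω ^ 2 * B ω ^ 2 - 2 * (N ω * (A ω * B ω ^ 2))) ℙ :=
      iA2B2.sub (iNAB2.const_mul 2)
    have i2 : Integrable (fun ω => 2 * (N ω * (A ω * B ω ^ 2))) ℙ := iNAB2.const_mul 2
    rw [e, integral_add i12 iN2B2, integral_sub iA2B2 i2, integral_const_mul]
  -- second-moment bound
  have hsecond : (∫ ω, G ω ^ 2) ≤ σ ^ 2 + C * (∫ ω, A ω ^ 2) := by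
    calc (∫ ω, G ω ^ 2) ≤ ∫ ω, (A ω - N ω) ^ 2 * B ω ^ 2 := by
          refine integral_mono iG2 iDom fun ω => ?_
          rw [hGform ω]
          have := clip_sq_le κ (A ω - N ω) (B ω) hκ
          calc (κ * ((A ω - N ω) / max |A ω - N ω| κ) * B ω) ^ 2
              ≤ ((A ω - N ω) * B ω) ^ 2 := this
            _ = (A ω - N ω) ^ 2 * B ω ^ 2 := by ring
      _ = (∫ ω, A ω ^ 2 * B ω ^ 2) - 2 * (∫ ω, N ω * (A ω * B ω ^ 2)) +
            (∫ ω, N ω ^ 2 * B ω ^ 2) := hsplit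
      _ = (∫ ω, A ω ^ 2 * B ω ^ 2) + (∫ ω, N ω ^ 2 * B ω ^ 2) := by
          rw [hcross]; ring
      _ ≤ C * (∫ ω, A ω ^ 2) + σ ^ 2 := add_le_add hmain hnoise
      _ = σ ^ 2 + C * (∫ ω, A ω ^ 2) := by ring
  refine ⟨hsecond, ?_⟩
  calc variance G ℙ ≤ ∫ ω, (G ^ 2) ω := variance_le_expectation_sq hGmeas.aestronglyMeasurable
    _ = ∫ ω, G ω ^ 2 := by simp [Pi.pow_apply]
    _ ≤ σ ^ 2 + C * (∫ ω, A ω ^ 2) := hsecond
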